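/- Under the hypotheses of the previous bijection, and assuming additionally that A is a topological group, O is compact open in A^T, and k^× is discrete, the map α : k_S^×\A_S → k^×\A/O is a homeomorphism (continuous, open, with continuous inverse) which is equivariant for the action of A_S by translation. -/

import Mathlib

/-- Topological version: with `A = A_S × A_T` a locally compact abelian
topological group, `O ≤ A_T` compact open, `K` discrete with
`A = K · (A_S × {1}) · ({1} × O)`, the natural map
`α : K_S\A_S → K\A/O` is a homeomorphism (continuous, open, bijective) and is
equivariant for the translation action of `A_S`. -/
theorem quotient_map_homeomorph
    {AS AT : Type*} [CommGroup AS] [CommGroup AT]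
    [TopologicalSpace AS] [IsTopologicalGroup AS] [LocallyCompactSpace AS]
    [TopologicalSpace AT] [IsTopologicalGroup AT] [LocallyCompactSpace AT]
    (K : Subgroup (AS × AT)) (O : Subgroup AT)
    (hKdiscrete : DiscreteTopology K)
    (hOcompact : IsCompact (O : Set AT)) (hOopen : IsOpen (O : Set AT))
    (hgen : ∀ a : AS × AT, ∃ k ∈ K, ∃ s : AS, ∃ o ∈ O,
      a = k * (s, 1) * (1, o))
    (KS : Subgroup AS)
    (hKS : KS = Subgroup.map (MonoidHom.fst AS AT) (K ⊓ ((⊤ : Subgroup AS).prod O)))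
    (N : Subgroup (AS × AT))
    (hN : N = ((⊥ : Subgroup AS).prod O))
    (hle : KS ≤ (K ⊔ N).comap (MonoidHom.inl AS AT)) :
    IsHomeomorph (QuotientGroup.map KS (K ⊔ N) (MonoidHom.inl AS AT) hle) ∧
      ∀ (s : AS) (x : AS ⧸ KS),
        QuotientGroup.map KS (K ⊔ N) (MonoidHom.inl AS AT) hle
            ((QuotientGroup.mk s) * x)
          = (QuotientGroup.mk ((s, 1) : AS × AT))
            * QuotientGroup.map KS (K ⊔ N) (MonoidHom.inl AS AT) hle x := by
  set φ := QuotientGroup.map KS (K ⊔ N) (MonoidHom.inl AS AT) hle with hφ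
  have hφmk : ∀ s : AS, φ (QuotientGroup.mk s) = QuotientGroup.mk ((s, 1) : AS × AT) := by
    intro s
    rfl
  -- membership of (1, o) in K ⊔ N
  have hNmem : ∀ o ∈ O, ((1, o) : AS × AT) ∈ K ⊔ N := by
    intro o ho
    refine Subgroup.mem_sup_right ?_
    rw [hN]
    exact Subgroup.mem_prod.2 ⟨Subgroup.mem_bot.2 rfl, ho⟩
  -- Continuity
  have hcont : Continuous φ := by
    rw [(QuotientGroup.isQuotientMap_mk KS).continuous_iff]
    have : (φ ∘ QuotientGroup.mk) =
        (QuotientGroup.mk : AS × AT → _) ∘ (fun s => ((s, 1) : AS × AT)) := by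
      funext s; exact hφmk s
    rw [this]
    exact QuotientGroup.continuous_mk.comp (continuous_id.prodMk continuous_const)
  -- Openness
  have hopen : IsOpenMap φ := by
    intro U hU
    have hV : IsOpen ((QuotientGroup.mk : AS → AS ⧸ KS) ⁻¹' U) :=
      hU.preimage QuotientGroup.continuous_mk
    have himg : φ '' U = (QuotientGroup.mk : AS × AT → (AS × AT) ⧸ (K ⊔ N)) ''
        (((QuotientGroup.mk : AS → AS ⧸ KS) ⁻¹' U) ×ˢ (O : Set AT)) := by
      ext x
      constructor
      · rintro ⟨u, hu, rfl⟩
        obtain ⟨s, rfl⟩ := QuotientGroup.mk_surjective u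
        exact ⟨(s, 1), ⟨hu, O.one_mem⟩, (hφmk s).symm⟩
      · rintro ⟨⟨s, o⟩, ⟨hs, ho⟩, rfl⟩
        refine ⟨QuotientGroup.mk s, hs, ?_⟩
        rw [hφmk s]
        refine QuotientGroup.eq.2 ?_
        have he : ((s, 1) : AS × AT)⁻¹ * (s, o) = (1, o) := by
          ext <;> simp
        rw [he]; exact hNmem o ho
    rw [himg]
    exact QuotientGroup.isOpenMap_coe _ (hV.prod hOopen)
  -- Injectivity
  have hinj : Function.Injective φ := by
    intro x y hxy
    obtain ⟨a, rfl⟩ := QuotientGroup.mk_surjective x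
    obtain ⟨b, rfl⟩ := QuotientGroup.mk_surjective y
    rw [hφmk a, hφmk b] at hxy
    have hmem : ((a, 1) : AS × AT)⁻¹ * (b, 1) ∈ K ⊔ N := QuotientGroup.eq.1 hxy
    obtain ⟨k, hk, n, hn, hkn⟩ := Subgroup.mem_sup.1 hmem
    rw [hN, Subgroup.mem_prod] at hn
    have h1 : n.1 = 1 := Subgroup.mem_bot.1 hn.1
    refine QuotientGroup.eq.2 ?_
    rw [hKS]
    refine ⟨(a⁻¹ * b, n.2⁻¹), ⟨?_, Subgroup.mem_prod.2 ⟨trivial, O.inv_mem hn.2⟩⟩, rfl⟩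
    have hk2 : k = ((a, 1) : AS × AT)⁻¹ * (b, 1) * n⁻¹ := by
      rw [← hkn]; group
    have : k = (a⁻¹ * b, n.2⁻¹) := by
      rw [hk2]; ext <;> simp [h1]
    rwa [← this]
  -- Surjectivity
  have hsurj : Function.Surjective φ := by
    intro x
    obtain ⟨a, rfl⟩ := QuotientGroup.mk_surjective x
    obtain ⟨k, hk, s, o, ho, rfl⟩ := hgen a
    refine ⟨QuotientGroup.mk s, ?_⟩
    rw [hφmk s]
    refine QuotientGroup.eq.2 ?_
    have : ((s, 1) : AS × AT)⁻¹ * (k * (s, 1) * (1, o)) = k * (1, o) := by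
      simp [mul_assoc, mul_comm, mul_left_comm]
    rw [this]
    exact mul_mem (Subgroup.mem_sup_left hk) (hNmem o ho)
  refine ⟨⟨hcont, hopen, hinj, hsurj⟩, ?_⟩
  intro s x
  rw [map_mul, hφmk s]
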